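/- For integers d ≥ 1 and 0 ≤ q < d, the constant term of the Laurent expansion at t = 1 of (1/d) · Σ_{α^d = 1} α^{-q}/(1 - α t)² equals -(d-1)(d-5)/(12d) - (q² + 2q - qd)/(2d). -/

import Mathlib

open BigOperators Filter Polynomial Finset

namespace Stmt3Aux

noncomputable def R (d : ℕ) : Finset ℂ := (nthRoots d (1 : ℂ)).toFinset

lemma R_eq (d : ℕ) : R d = nthRootsFinset d (1 : ℂ) := (nthRootsFinset_def d (1 : ℂ)).symm

lemma mem_R {d : ℕ} (hd : 1 ≤ d) {α : ℂ} : α ∈ R d ↔ α ^ d = 1 := by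
  rw [R, Multiset.mem_toFinset, mem_nthRoots hd]

lemma one_mem_R {d : ℕ} (hd : 1 ≤ d) : (1 : ℂ) ∈ R d := (mem_R hd).2 (one_pow d)

lemma card_R {d : ℕ} (hd : 1 ≤ d) : (R d).card = d := by
  rw [R_eq]
  exact (Complex.isPrimitiveRoot_exp d (by omega)).card_nthRootsFinset

noncomputable def F (d : ℕ) : Finset ℂ := (R d).erase 1

lemma mem_F {d : ℕ} (hd : 1 ≤ d) {α : ℂ} (hα : α ∈ F d) :
    α ≠ 1 ∧ α ^ d = 1 ∧ α ≠ 0 := by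
  obtain ⟨h1, h2⟩ := Finset.mem_erase.mp hα
  rw [mem_R hd] at h2
  refine ⟨h1, h2, fun h => ?_⟩
  rw [h, zero_pow (by omega : d ≠ 0)] at h2
  exact zero_ne_one h2

lemma card_F {d : ℕ} (hd : 1 ≤ d) : (F d).card = d - 1 := by
  rw [F, Finset.card_erase_of_mem (one_mem_R hd), card_R hd]

lemma inv_mem_F {d : ℕ} (hd : 1 ≤ d) {α : ℂ} (hα : α ∈ F d) : α⁻¹ ∈ F d := by
  obtain ⟨h1, h2, h0⟩ := mem_F hd hα
  refine Finset.mem_erase.mpr ⟨fun h => h1 ?_, (mem_R hd).2 ?_⟩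
  · rwa [inv_eq_one] at h
  · rw [inv_pow, h2, inv_one]

/-- transfer sums along the inverse bijection on F -/
lemma sum_inv_F {d : ℕ} (hd : 1 ≤ d) (f : ℂ → ℂ) :
    ∑ α ∈ F d, f α⁻¹ = ∑ α ∈ F d, f α := by
  refine Finset.sum_nbij' (fun α => α⁻¹) (fun α => α⁻¹)
    (fun a ha => inv_mem_F hd ha) (fun a ha => inv_mem_F hd ha) ?_ ?_ ?_
  · intro a ha; exact inv_inv a
  · intro a ha; exact inv_inv a
  · intro a ha; rfl

lemma sum_pow_R {d : ℕ} (hd : 1 ≤ d) {m : ℕ} (h0 : 0 < m) (hm : m < d) :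
    ∑ α ∈ R d, α ^ m = 0 := by
  have hdz : d ≠ 0 := by omega
  set ζ : ℂ := Complex.exp (2 * Real.pi * Complex.I / d) with hζdef
  have hζ : IsPrimitiveRoot ζ d := Complex.isPrimitiveRoot_exp d hdz
  have hζR : ζ ^ d = 1 := hζ.pow_eq_one
  have hζ0 : ζ ≠ 0 := fun h => by simp [h, zero_pow hdz] at hζR
  have key : ∑ α ∈ R d, α ^ m = ζ ^ m * ∑ α ∈ R d, α ^ m := by
    rw [Finset.mul_sum]
    refine Finset.sum_nbij' (fun α => ζ⁻¹ * α) (fun α => ζ * α) ?_ ?_ ?_ ?_ ?_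
    · intro a ha
      rw [mem_R hd] at ha ⊢
      rw [mul_pow, inv_pow, hζR, inv_one, one_mul, ha]
    · intro a ha
      rw [mem_R hd] at ha ⊢
      rw [mul_pow, hζR, one_mul, ha]
    · intro a _; field_simp
    · intro a _; field_simp
    · intro a _
      show a ^ m = ζ ^ m * (ζ⁻¹ * a) ^ m
      rw [mul_pow, inv_pow, ← mul_assoc, mul_inv_cancel₀ (pow_ne_zero m hζ0), one_mul]
  have hne : ζ ^ m ≠ 1 := hζ.pow_ne_one_of_pos_of_lt h0.ne' hm
  have h2 : (1 - ζ ^ m) * ∑ α ∈ R d, α ^ m = 0 := by linear_combination key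
  rcases mul_eq_zero.mp h2 with h' | h'
  · exact absurd (sub_eq_zero.mp h').symm hne
  · exact h'

lemma sum_pow_F {d : ℕ} (hd : 1 ≤ d) {m : ℕ} (h0 : 0 < m) (hm : m < d) :
    ∑ α ∈ F d, α ^ m = -1 := by
  have h := sum_pow_R hd h0 hm
  rw [← Finset.add_sum_erase _ _ (one_mem_R hd), one_pow] at h
  show ∑ α ∈ (R d).erase 1, α ^ m = -1
  linear_combination h

lemma sum_inv_pow_F {d : ℕ} (hd : 1 ≤ d) {m : ℕ} (h0 : 0 < m) (hm : m < d) :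
    ∑ α ∈ F d, (α⁻¹) ^ m = -1 := by
  rw [sum_inv_F hd (fun α => α ^ m)]
  exact sum_pow_F hd h0 hm

noncomputable def T (d q : ℕ) : ℂ := ∑ α ∈ F d, (α⁻¹) ^ q / (1 - α)

noncomputable def S (d q : ℕ) : ℂ := ∑ α ∈ F d, (α⁻¹) ^ q / (1 - α) ^ 2

lemma T_zero {d : ℕ} (hd : 1 ≤ d) : T d 0 = ((d : ℂ) - 1) / 2 := by
  have key : T d 0 + T d 0 = (d : ℂ) - 1 := by
    have h1 : T d 0 = ∑ α ∈ F d, 1 / (1 - α⁻¹) := by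
      rw [T]
      exact (sum_inv_F hd (fun α => (1:ℂ) / (1 - α))).symm.trans (by
        refine Finset.sum_congr rfl fun a ha => by simp)
    nth_rewrite 1 [h1]
    rw [T, ← Finset.sum_add_distrib]
    have : ∑ α ∈ F d, (1 / (1 - α⁻¹) + (α⁻¹) ^ 0 / (1 - α)) = ∑ α ∈ F d, (1 : ℂ) := by
      refine Finset.sum_congr rfl fun a ha => ?_
      obtain ⟨h1a, _, h0a⟩ := mem_F hd ha
      have hne : (1 : ℂ) - a ≠ 0 := sub_ne_zero.mpr (fun h => h1a h.symm)
      have hne' : (1 : ℂ) - a⁻¹ ≠ 0 := by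
        rw [sub_ne_zero]
        intro h
        exact h1a (by rw [← inv_inv a, ← h, inv_one])
      rw [pow_zero, div_add_div _ _ hne' hne, div_eq_one_iff_eq (mul_ne_zero hne' hne)]
      field_simp
      ring
    rw [this, Finset.sum_const, card_F hd, nsmul_eq_mul]
    push_cast [Nat.cast_sub hd]
    ring
  linear_combination key / 2

lemma T_succ {d : ℕ} (hd : 1 ≤ d) {q : ℕ} (hq : q + 1 < d) :
    T d (q + 1) = T d q - 1 := by
  have hs : ∑ α ∈ F d, (α⁻¹) ^ (q + 1) = -1 := sum_inv_pow_F hd (Nat.succ_pos q) hq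
  have key : T d q - T d (q + 1) = - ∑ α ∈ F d, (α⁻¹) ^ (q + 1) := by
    rw [T, T, ← Finset.sum_sub_distrib, ← Finset.sum_neg_distrib]
    refine Finset.sum_congr rfl fun a ha => ?_
    obtain ⟨h1a, _, h0a⟩ := mem_F hd ha
    have hne : (1 : ℂ) - a ≠ 0 := sub_ne_zero.mpr (fun h => h1a h.symm)
    field_simp
    ring_nf; rw [mul_inv_cancel₀ h0a]; ring
  rw [hs] at key
  linear_combination -key

lemma T_eq {d : ℕ} (hd : 1 ≤ d) {q : ℕ} (hq : q < d) :
    T d q = ((d : ℂ) - 1) / 2 - q := by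
  induction q with
  | zero => simpa using T_zero hd
  | succ n ih =>
      rw [T_succ hd hq, ih (by omega)]
      push_cast
      ring

lemma S_succ {d : ℕ} (hd : 1 ≤ d) {q : ℕ} (hq : q + 1 < d) :
    S d (q + 1) = S d q + T d (q + 1) := by
  have key : S d q - S d (q + 1) = - T d (q + 1) := by
    rw [S, S, T, ← Finset.sum_sub_distrib, ← Finset.sum_neg_distrib]
    refine Finset.sum_congr rfl fun a ha => ?_
    obtain ⟨h1a, _, h0a⟩ := mem_F hd ha
    have hne : (1 : ℂ) - a ≠ 0 := sub_ne_zero.mpr (fun h => h1a h.symm)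
    field_simp
    ring_nf; rw [mul_inv_cancel₀ h0a]; ring
  linear_combination -key

lemma S_eq_S0 {d : ℕ} (hd : 1 ≤ d) {q : ℕ} (hq : q < d) :
    S d q = S d 0 + q * ((d : ℂ) - 1) / 2 - q * (q + 1) / 2 := by
  induction q with
  | zero => push_cast; ring
  | succ n ih =>
      rw [S_succ hd hq, T_eq hd hq, ih (by omega)]
      push_cast
      ring

lemma sum_range_cast (n : ℕ) : ∑ q ∈ Finset.range n, (q : ℂ) = n * (n - 1) / 2 := by
  induction n with
  | zero => simp
  | succ m ih =>
      rw [Finset.sum_range_succ, ih]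
      push_cast
      ring

lemma sum_range_sq_cast (n : ℕ) :
    ∑ q ∈ Finset.range n, (q : ℂ) ^ 2 = n * (n - 1) * (2 * n - 1) / 6 := by
  induction n with
  | zero => simp
  | succ m ih =>
      rw [Finset.sum_range_succ, ih]
      push_cast
      ring

lemma sum_S_zero {d : ℕ} (hd : 1 ≤ d) : ∑ q ∈ Finset.range d, S d q = 0 := by
  simp only [S]
  rw [Finset.sum_comm]
  refine Finset.sum_eq_zero fun a ha => ?_
  obtain ⟨h1a, hda, h0a⟩ := mem_F hd ha
  have hinv1 : a⁻¹ ≠ 1 := fun h => h1a (by rw [← inv_inv a, h, inv_one])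
  have hinvd : (a⁻¹) ^ d = 1 := by rw [inv_pow, hda, inv_one]
  rw [← Finset.sum_div, geom_sum_eq hinv1, hinvd]
  simp

lemma S_zero {d : ℕ} (hd : 1 ≤ d) : S d 0 = ((d : ℂ) - 1) * (5 - d) / 12 := by
  have hdz : (d : ℂ) ≠ 0 := Nat.cast_ne_zero.mpr (by omega)
  have h := sum_S_zero hd
  have h2 : ∑ q ∈ Finset.range d, S d q
      = (d : ℂ) * S d 0 + ((d : ℂ) / 2 - 1) * (∑ q ∈ Finset.range d, (q : ℂ))
        - (1 / 2) * ∑ q ∈ Finset.range d, (q : ℂ) ^ 2 := by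
    calc ∑ q ∈ Finset.range d, S d q
        = ∑ q ∈ Finset.range d,
            (S d 0 + ((d : ℂ) / 2 - 1) * (q : ℂ) - (1 / 2) * (q : ℂ) ^ 2) := by
          refine Finset.sum_congr rfl fun q hq => ?_
          rw [S_eq_S0 hd (Finset.mem_range.mp hq)]
          ring
      _ = _ := by
          rw [Finset.sum_sub_distrib, Finset.sum_add_distrib, ← Finset.mul_sum,
            ← Finset.mul_sum, Finset.sum_const, Finset.card_range, nsmul_eq_mul]
  rw [h2, sum_range_cast, sum_range_sq_cast] at h
  have h3 : (d : ℂ) * S d 0 = (d : ℂ) * (((d : ℂ) - 1) * (5 - d) / 12) := by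
    linear_combination h
  exact mul_left_cancel₀ hdz h3

lemma S_val {d q : ℕ} (hd : 1 ≤ d) (hq : q < d) :
    S d q = ((d : ℂ) - 1) * (5 - d) / 12 + q * ((d : ℂ) - 1) / 2 - q * (q + 1) / 2 := by
  rw [S_eq_S0 hd hq, S_zero hd]

end Stmt3Aux

theorem stmt3 (d q : ℕ) (hd : 1 ≤ d) (hq : q < d) :
    ∃ c₁ c₂ : ℂ, Filter.Tendsto
      (fun t : ℂ =>
        (1 / (d : ℂ)) * ∑ α ∈ (Polynomial.nthRoots d (1 : ℂ)).toFinset,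
            α⁻¹ ^ q / (1 - α * t) ^ 2
          - c₂ / (1 - t) ^ 2 - c₁ / (1 - t))
      (nhdsWithin 1 {(1 : ℂ)}ᶜ)
      (nhds (-(((d : ℂ) - 1) * ((d : ℂ) - 5)) / (12 * d)
        - ((q : ℂ) ^ 2 + 2 * q - q * d) / (2 * d))) := by
  refine ⟨0, 1 / (d : ℂ), ?_⟩
  open Stmt3Aux in
  have hfun : (fun t : ℂ =>
        (1 / (d : ℂ)) * ∑ α ∈ (Polynomial.nthRoots d (1 : ℂ)).toFinset,
            α⁻¹ ^ q / (1 - α * t) ^ 2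
          - (1 / (d : ℂ)) / (1 - t) ^ 2 - 0 / (1 - t))
      = fun t : ℂ => (1 / (d : ℂ)) * ∑ α ∈ Stmt3Aux.F d, α⁻¹ ^ q / (1 - α * t) ^ 2 := by
    funext t
    have hsplit : ∑ α ∈ (Polynomial.nthRoots d (1 : ℂ)).toFinset,
        α⁻¹ ^ q / (1 - α * t) ^ 2
        = (1 : ℂ)⁻¹ ^ q / (1 - 1 * t) ^ 2
          + ∑ α ∈ Stmt3Aux.F d, α⁻¹ ^ q / (1 - α * t) ^ 2 := by
      exact (Finset.add_sum_erase _ _ (Stmt3Aux.one_mem_R hd)).symm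
    rw [hsplit]
    simp only [inv_one, one_pow, one_mul, zero_div]
    ring
  rw [hfun]
  have hcont : Filter.Tendsto
      (fun t : ℂ => (1 / (d : ℂ)) * ∑ α ∈ Stmt3Aux.F d, α⁻¹ ^ q / (1 - α * t) ^ 2)
      (nhdsWithin 1 {(1 : ℂ)}ᶜ)
      (nhds ((1 / (d : ℂ)) * ∑ α ∈ Stmt3Aux.F d, α⁻¹ ^ q / (1 - α * 1) ^ 2)) := by
    apply tendsto_nhdsWithin_of_tendsto_nhds
    apply Filter.Tendsto.const_mul
    apply tendsto_finset_sum
    intro α hα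
    obtain ⟨h1a, _, _⟩ := Stmt3Aux.mem_F hd hα
    refine Filter.Tendsto.div tendsto_const_nhds ?_ ?_
    · exact ((continuous_const.sub (continuous_const.mul continuous_id)).pow 2).tendsto 1
    · apply pow_ne_zero
      rw [mul_one]
      exact sub_ne_zero.mpr (fun h => h1a h.symm)
  have hval : (1 / (d : ℂ)) * ∑ α ∈ Stmt3Aux.F d, α⁻¹ ^ q / (1 - α * 1) ^ 2
      = -(((d : ℂ) - 1) * ((d : ℂ) - 5)) / (12 * d)
        - ((q : ℂ) ^ 2 + 2 * q - q * d) / (2 * d) := by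
    have hS : ∑ α ∈ Stmt3Aux.F d, α⁻¹ ^ q / (1 - α * 1) ^ 2 = Stmt3Aux.S d q := by
      unfold Stmt3Aux.S
      refine Finset.sum_congr rfl fun a _ => by rw [mul_one]
    rw [hS, Stmt3Aux.S_val hd hq]
    have hdz : (d : ℂ) ≠ 0 := Nat.cast_ne_zero.mpr (by omega)
    field_simp
    ring
  rw [← hval]
  exact hcont
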